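/- Let X be a real random variable with 0 < E|X| < ∞. Define H(t) = E[X² 1{|X| ≤ t}] and M(t) = E[|X| 1{|X| > t}] for t ≥ 0. Then the function G(t) = t²/(H(t) + t·M(t)), defined for t > 0, is continuous and strictly increasing on (0, ∞). -/

import Mathlib

open MeasureTheory ProbabilityTheory Filter Set
open scoped ProbabilityTheory

theorem stmt_0 {Ω : Type*} [MeasureSpace Ω] [IsProbabilityMeasure (ℙ : Measure Ω)]
    (X : Ω → ℝ) (hX : Measurable X)
    (hInt : Integrable X) (hpos : 0 < ∫ ω, |X ω|)
    (H M G : ℝ → ℝ)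
    (hH : ∀ t, H t = ∫ ω, (if |X ω| ≤ t then (X ω) ^ 2 else 0))
    (hM : ∀ t, M t = ∫ ω, (if t < |X ω| then |X ω| else 0))
    (hG : ∀ t, G t = t ^ 2 / (H t + t * M t)) :
    ContinuousOn G (Ioi 0) ∧ StrictMonoOn G (Ioi 0) := by
  -- integrability of the basic function
  have hfint : ∀ t : ℝ, Integrable (fun ω => |X ω| * min (|X ω|) t) := by
    intro t
    apply Integrable.mono (hInt.abs.const_mul |t|)
    · exact (hX.abs.mul (hX.abs.min measurable_const)).aestronglyMeasurable
    · refine ae_of_all _ fun ω => ?_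
      have hx : (0:ℝ) ≤ |X ω| := abs_nonneg _
      rcases le_total (|X ω|) t with h | h
      · rw [min_eq_left h]
        simp only [Real.norm_eq_abs, abs_mul, abs_abs]
        have : |X ω| ≤ |t| := h.trans (le_abs_self t)
        nlinarith [abs_nonneg t]
      · rw [min_eq_right h]
        simp only [Real.norm_eq_abs, abs_mul, abs_abs]
        nlinarith [abs_nonneg t, le_abs_self t, neg_abs_le t]
  -- key identity
  have hkey : ∀ t : ℝ, 0 < t → H t + t * M t = ∫ ω, |X ω| * min (|X ω|) t := by
    intro t ht
    have hi1 : Integrable (fun ω => if |X ω| ≤ t then (X ω) ^ 2 else 0) := by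
      apply Integrable.mono (hInt.abs.const_mul t)
      · exact (Measurable.ite (measurableSet_le hX.abs measurable_const)
          (hX.pow_const 2) measurable_const).aestronglyMeasurable
      · refine ae_of_all _ fun ω => ?_
        by_cases h : |X ω| ≤ t
        · simp only [h, if_true, Real.norm_eq_abs, abs_mul, abs_abs]
          have h2 : |(X ω) ^ 2| = |X ω| * |X ω| := by
            rw [abs_of_nonneg (sq_nonneg _), ← sq_abs, sq]
          rw [h2, abs_of_pos ht]
          nlinarith [abs_nonneg (X ω)]
        · simp only [h, if_false, Real.norm_eq_abs, abs_zero]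
          positivity
    have hi2 : Integrable (fun ω => if t < |X ω| then |X ω| else 0) := by
      apply Integrable.mono hInt.abs
      · exact (Measurable.ite (measurableSet_lt measurable_const hX.abs)
          hX.abs measurable_const).aestronglyMeasurable
      · refine ae_of_all _ fun ω => ?_
        by_cases h : t < |X ω| <;> simp [h, abs_nonneg]
    rw [hH, hM, ← integral_const_mul, ← integral_add hi1 (hi2.const_mul t)]
    refine integral_congr_ae (ae_of_all _ fun ω => ?_)
    simp only
    by_cases h : |X ω| ≤ t
    · rw [min_eq_left h, if_pos h, if_neg (not_lt.mpr h), ← sq_abs]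
      ring
    · push_neg at h
      rw [min_eq_right h.le, if_neg (not_le.mpr h), if_pos h]
      ring
  -- positivity of support measure
  have hsupp : 0 < (ℙ : Measure Ω) (Function.support fun ω => |X ω|) :=
    (integral_pos_iff_support_of_nonneg_ae (ae_of_all _ fun ω => abs_nonneg _) hInt.abs).mp hpos
  -- positivity of D
  have hDpos : ∀ t : ℝ, 0 < t → 0 < ∫ ω, |X ω| * min (|X ω|) t := by
    intro t ht
    rw [integral_pos_iff_support_of_nonneg_ae
      (ae_of_all _ fun ω => mul_nonneg (abs_nonneg _) (le_min (abs_nonneg _) ht.le)) (hfint t)]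
    refine hsupp.trans_le (measure_mono fun ω hω => ?_)
    simp only [Function.support, mem_setOf_eq] at hω ⊢
    have hx : 0 < |X ω| := (abs_nonneg _).lt_of_ne (Ne.symm hω)
    exact (mul_pos hx (lt_min hx ht)).ne'
  -- continuity of D
  have hE : 0 ≤ ∫ ω, |X ω| := le_of_lt hpos
  have hcontD : Continuous fun t : ℝ => ∫ ω, |X ω| * min (|X ω|) t := by
    apply LipschitzWith.continuous (K := ⟨∫ ω, |X ω|, hE⟩)
    apply LipschitzWith.of_dist_le_mul
    intro a b
    rw [Real.dist_eq, Real.dist_eq, ← integral_sub (hfint a) (hfint b)]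
    have hb : ∀ᵐ ω ∂(ℙ : Measure Ω),
        ‖|X ω| * min (|X ω|) a - |X ω| * min (|X ω|) b‖ ≤ |X ω| * |a - b| := by
      refine ae_of_all _ fun ω => ?_
      have : |X ω| * min (|X ω|) a - |X ω| * min (|X ω|) b
          = |X ω| * (min (|X ω|) a - min (|X ω|) b) := by ring
      rw [this, Real.norm_eq_abs, abs_mul, abs_abs]
      refine mul_le_mul_of_nonneg_left ?_ (abs_nonneg _)
      rw [abs_sub_le_iff]
      constructor <;>
      · rcases le_total (|X ω|) a with h1 | h1 <;> rcases le_total (|X ω|) b with h2 | h2 <;>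
          simp only [min_eq_left h1, min_eq_right h1, min_eq_left h2, min_eq_right h2] <;>
          cases abs_cases (a - b) <;> linarith
    have := norm_integral_le_of_norm_le (hInt.abs.mul_const |a - b|) hb
    rw [integral_mul_const] at this
    exact (by simpa [Real.norm_eq_abs, NNReal.coe_mk, mul_comm] using this :
      _ ≤ (∫ ω, |X ω|) * |a - b|)
  refine ⟨?_, ?_⟩
  · -- continuity of G on Ioi 0
    have h1 : ContinuousOn (fun t : ℝ => t ^ 2 / ∫ ω, |X ω| * min (|X ω|) t) (Ioi 0) :=
      ContinuousOn.div (continuous_pow 2).continuousOn hcontD.continuousOn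
        fun t ht => (hDpos t ht).ne'
    exact h1.congr fun t ht => by rw [hG, hkey t ht]
  · -- strict monotonicity
    intro s hs t ht hst
    rw [mem_Ioi] at hs ht
    -- pointwise inequality
    have hpt : ∀ x : ℝ, 0 ≤ x → s ^ 2 * (x * min x t) ≤ t ^ 2 * (x * min x s) ∧
        (x ≠ 0 → s ^ 2 * (x * min x t) < t ^ 2 * (x * min x s)) := by
      intro x hx
      rcases le_total x s with h1 | h1
      · rw [min_eq_left h1, min_eq_left (h1.trans hst.le)]
        constructor
        · nlinarith [mul_nonneg (mul_nonneg (mul_nonneg hx hx) (sub_nonneg.mpr hst.le))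
            (by linarith : (0:ℝ) ≤ t + s)]
        · intro hx0
          have hx1 : 0 < x := hx.lt_of_ne (Ne.symm hx0)
          nlinarith [mul_pos (mul_pos (mul_pos hx1 hx1) (sub_pos.mpr hst))
            (by linarith : (0:ℝ) < t + s)]
      · have hxpos : 0 < x := lt_of_lt_of_le hs h1
        rcases le_total x t with h2 | h2
        · rw [min_eq_left h2, min_eq_right h1]
          have ha : s * x ≤ s * t := mul_le_mul_of_nonneg_left h2 hs.le
          have hb : s * t < t * t := mul_lt_mul_of_pos_right hst ht
          have h3 : 0 < t ^ 2 - s * x := by nlinarith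
          have h4 : 0 < x * s * (t ^ 2 - s * x) := mul_pos (mul_pos hxpos hs) h3
          exact ⟨by nlinarith, fun _ => by nlinarith⟩
        · rw [min_eq_right h2, min_eq_right h1]
          have h4 : 0 < x * t * s * (t - s) :=
            mul_pos (mul_pos (mul_pos hxpos ht) hs) (sub_pos.mpr hst)
          exact ⟨by nlinarith, fun _ => by nlinarith⟩
    have hposint : 0 < ∫ ω,
        (t ^ 2 * (|X ω| * min (|X ω|) s) - s ^ 2 * (|X ω| * min (|X ω|) t)) := by
      rw [integral_pos_iff_support_of_nonneg_ae
        (ae_of_all _ fun ω => sub_nonneg.mpr (hpt _ (abs_nonneg _)).1)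
        (((hfint s).const_mul (t ^ 2)).sub ((hfint t).const_mul (s ^ 2)))]
      refine hsupp.trans_le (measure_mono fun ω hω => ?_)
      simp only [Function.support, mem_setOf_eq] at hω ⊢
      exact (sub_pos.mpr ((hpt _ (abs_nonneg _)).2 hω)).ne'
    rw [integral_sub ((hfint s).const_mul (t ^ 2)) ((hfint t).const_mul (s ^ 2)),
      integral_const_mul, integral_const_mul] at hposint
    rw [hG, hG, hkey s hs, hkey t ht,
      div_lt_div_iff₀ (hDpos s hs) (hDpos t ht)]
    linarith
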